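/- Let E be a complex Hilbert space, F₊ and F₋ two orthonormal vectors in E, p₊, p₋ ≥ 0 with p₊ + p₋ = 1, and K : Fin n → (E →L[ℂ] E) a finite family of bounded operators satisfying the unitality condition ∑ i, K i ∘ (K i)† = 1 (the identity operator), where (K i)† denotes the adjoint. Then ∑ i, (p₊ * ‖⟪F₊, K i F₊⟫‖² + p₋ * ‖⟪F₊, K i F₋⟫‖²) ≤ max(p₊, p₋), and the same bound holds with F₋ in place of F₊ in the first slot. (This is inequality (28) of the paper: the Absoluteness-of-Measurement bound p(±1|Λ) ≤ max{p₊, p₋}, and hence T ≤ 1/2, persists when the super-observer applies an arbitrary unital quantum channel Λ with Kraus operators K i instead of a unitary.) -/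

import Mathlib

open scoped ComplexInnerProductSpace

lemma aux_bound {E : Type*} [NormedAddCommGroup E] [InnerProductSpace ℂ E]
    [CompleteSpace E]
    (Fp Fm F : E) (hF : ‖F‖ = 1) (hFp : ‖Fp‖ = 1) (hFm : ‖Fm‖ = 1)
    (horth : ⟪Fp, Fm⟫ = 0)
    (pp pm : ℝ) (hpp : 0 ≤ pp) (hpm : 0 ≤ pm) (hsum : pp + pm = 1)
    {n : ℕ} (K : Fin n → (E →L[ℂ] E))
    (hunital : ∑ i, (K i) ∘L (ContinuousLinearMap.adjoint (K i)) = 1) :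
    ∑ i, (pp * ‖⟪F, K i Fp⟫‖ ^ 2 + pm * ‖⟪F, K i Fm⟫‖ ^ 2) ≤ max pp pm := by
  set v : Fin n → E := fun i => ContinuousLinearMap.adjoint (K i) F with hv
  have hrw : ∀ i (x : E), ⟪F, K i x⟫ = ⟪v i, x⟫ := fun i x => by
    rw [hv, ContinuousLinearMap.adjoint_inner_left]
  -- orthonormal pair
  have hON : Orthonormal ℂ (fun b : Fin 2 => if b = 0 then Fp else Fm) := by
    rw [orthonormal_iff_ite]
    intro i j
    fin_cases i <;> fin_cases j <;>
      simp [hFp, hFm, horth, inner_self_eq_norm_sq_to_K, inner_eq_zero_symm.mp horth]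
  -- sum of norms squared equals 1
  have hvsum : ∑ i, ‖v i‖ ^ 2 = 1 := by
    have h1 : ∀ i, (‖v i‖ : ℝ) ^ 2 = (⟪F, ((K i) ∘L (ContinuousLinearMap.adjoint (K i))) F⟫).re := by
      intro i
      rw [← inner_self_eq_norm_sq (𝕜 := ℂ)]
      congr 1
      rw [hv]
      simp [ContinuousLinearMap.adjoint_inner_left]
      rw [← ContinuousLinearMap.adjoint_inner_left, inner_self_eq_norm_sq_to_K]
      rfl
    calc ∑ i, ‖v i‖ ^ 2
        = (⟪F, (∑ i, (K i) ∘L (ContinuousLinearMap.adjoint (K i))) F⟫).re := by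
          simp [h1, ContinuousLinearMap.sum_apply, inner_sum, Complex.re_sum]
      _ = 1 := by
          rw [hunital]
          rw [ContinuousLinearMap.one_apply,
            show ((⟪F, F⟫ : ℂ)).re = RCLike.re (⟪F, F⟫ : ℂ) from rfl,
            inner_self_eq_norm_sq, hF, one_pow]
  -- Bessel per i
  have hbessel : ∀ i, ‖⟪v i, Fp⟫‖ ^ 2 + ‖⟪v i, Fm⟫‖ ^ 2 ≤ ‖v i‖ ^ 2 := by
    intro i
    have := hON.sum_inner_products_le (s := Finset.univ) (v i)
    simpa [Fin.sum_univ_two, norm_inner_symm] using this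
  calc ∑ i, (pp * ‖⟪F, K i Fp⟫‖ ^ 2 + pm * ‖⟪F, K i Fm⟫‖ ^ 2)
      ≤ ∑ i, max pp pm * ‖v i‖ ^ 2 := by
        apply Finset.sum_le_sum
        intro i _
        rw [hrw, hrw]
        have h1 : pp * ‖⟪v i, Fp⟫‖ ^ 2 + pm * ‖⟪v i, Fm⟫‖ ^ 2
            ≤ max pp pm * (‖⟪v i, Fp⟫‖ ^ 2 + ‖⟪v i, Fm⟫‖ ^ 2) := by
          rw [mul_add]
          gcongr <;> [exact le_max_left _ _; exact le_max_right _ _] <;> positivity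
        exact h1.trans (mul_le_mul_of_nonneg_left (hbessel i)
          (le_trans hpp (le_max_left _ _)))
    _ = max pp pm := by rw [← Finset.mul_sum, hvsum, mul_one]

/-- Inequality (28): the AoM bound `p(±1|Λ) ≤ max{p₊, p₋}` persists for an
arbitrary unital quantum channel with Kraus operators `K i`. -/
theorem stmt_4 {E : Type*} [NormedAddCommGroup E] [InnerProductSpace ℂ E]
    [CompleteSpace E]
    (Fp Fm : E) (hFp : ‖Fp‖ = 1) (hFm : ‖Fm‖ = 1) (horth : ⟪Fp, Fm⟫ = 0)
    (pp pm : ℝ) (hpp : 0 ≤ pp) (hpm : 0 ≤ pm) (hsum : pp + pm = 1)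
    {n : ℕ} (K : Fin n → (E →L[ℂ] E))
    (hunital : ∑ i, (K i) ∘L (ContinuousLinearMap.adjoint (K i)) = 1) :
    (∑ i, (pp * ‖⟪Fp, K i Fp⟫‖ ^ 2 + pm * ‖⟪Fp, K i Fm⟫‖ ^ 2) ≤ max pp pm) ∧
    (∑ i, (pp * ‖⟪Fm, K i Fp⟫‖ ^ 2 + pm * ‖⟪Fm, K i Fm⟫‖ ^ 2) ≤ max pp pm) := by
  exact ⟨aux_bound Fp Fm Fp hFp hFp hFm horth pp pm hpp hpm hsum K hunital,
         aux_bound Fp Fm Fm hFm hFp hFm horth pp pm hpp hpm hsum K hunital⟩
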